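/- Uniform exponential ergodicity of CM3: for every n ≥ 1 and every x₀ ∈ [0,1], the n-step transition probability satisfies pⁿ(x₀,(0,1)) ≤ (3/4)ⁿ; hence for every x₀ ∈ [0,1), pⁿ(x₀,{0}) ≥ 1 − (3/4)ⁿ, and therefore sup_{x₀ ∈ [0,1)} ‖pⁿ(x₀,·) − δ₀‖ ≤ (3/4)ⁿ → 0 as n → ∞, i.e. the Markov measures converge to the invariant measure δ₀ in total variation, uniformly in the initial point x₀ ∈ [0,1) and with exponential rate. Moreover CM3 satisfies the Doob–Doeblin condition (D) with φ = (1/2)δ₀ + (1/2)δ₁, ε = 1/4 and k = 1. -/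

import Mathlib

open MeasureTheory Set Filter Topology Function

/-- A bounded finitely additive set function on the σ-algebra. -/
def IsFinAdd {X : Type*} [MeasurableSpace X] (μ : Set X → ℝ) : Prop :=
  μ ∅ = 0 ∧ ∀ E F : Set X, MeasurableSet E → MeasurableSet F → Disjoint E F →
    μ (E ∪ F) = μ E + μ F

/-- Nonnegativity on measurable sets. -/
def IsNonnegSF {X : Type*} [MeasurableSpace X] (μ : Set X → ℝ) : Prop :=
  ∀ E : Set X, MeasurableSet E → 0 ≤ μ E

/-- Countable additivity on the σ-algebra. -/
def IsCtblAdd {X : Type*} [MeasurableSpace X] (μ : Set X → ℝ) : Prop :=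
  ∀ E : ℕ → Set X, (∀ n, MeasurableSet (E n)) → Pairwise (Disjoint on E) →
    HasSum (fun n => μ (E n)) (μ (⋃ n, E n))

/-- A nonnegative finitely additive measure is purely finitely additive if the only
countably additive measure `lam` with `0 ≤ lam ≤ μ` is `lam = 0`. -/
def IsPurelyFinAdd {X : Type*} [MeasurableSpace X] (μ : Set X → ℝ) : Prop :=
  ∀ lam : Set X → ℝ, IsFinAdd lam → IsCtblAdd lam →
    (∀ E, MeasurableSet E → 0 ≤ lam E) → (∀ E, MeasurableSet E → lam E ≤ μ E) →
    ∀ E, MeasurableSet E → lam E = 0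

/-- The integral of a bounded measurable function with respect to a (finitely additive)
set function, defined by the layer-cake formula. -/
noncomputable def faIntegral {X : Type*} [MeasurableSpace X] (μ : Set X → ℝ) (f : X → ℝ) : ℝ :=
  (∫ t in Set.Ioi (0:ℝ), μ {x | t < f x}) - (∫ t in Set.Ioi (0:ℝ), μ {x | f x < -t})

/-- The Dirac measure at `y`, as a set function. -/
noncomputable def diracSF (y : ℝ) (E : Set ℝ) : ℝ := E.indicator (fun _ => (1:ℝ)) y

/-- The transition function of CM1: `p(x,·) = x·δ_{x²} + (1-x)·δ₀` on `(0,1)`,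
`p(0,·) = δ₀`, `p(1,·) = δ₁` (the formula below specializes correctly at `0` and `1`). -/
noncomputable def p1 (x : ℝ) (E : Set ℝ) : ℝ :=
  x * diracSF (x ^ 2) E + (1 - x) * diracSF 0 E

/-- The transition function of CM2: `p(x,·) = (1-x)·δ_{x²} + x·δ₀` on `(0,1)`,
`p(0,·) = δ₀`, `p(1,·) = δ₁`. -/
noncomputable def p2 (x : ℝ) (E : Set ℝ) : ℝ :=
  if x = 1 then diracSF 1 E else (1 - x) * diracSF (x ^ 2) E + x * diracSF 0 E

/-- The transition function of CM3: the CM1 rule on `[0,1/2]`, the CM2 rule on `(1/2,1)`,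
`p(1,·) = δ₁`. -/
noncomputable def p3 (x : ℝ) (E : Set ℝ) : ℝ :=
  if x = 1 then diracSF 1 E
  else if x ≤ 1 / 2 then x * diracSF (x ^ 2) E + (1 - x) * diracSF 0 E
  else (1 - x) * diracSF (x ^ 2) E + x * diracSF 0 E

/-- The `n`-step transition function of CM1 (`p1n 0` is the identity kernel, and
`p1n (n+1) x E = ∫ p1n n (y,E) p(x,dy)` is the integral convolution). -/
noncomputable def p1n : ℕ → ℝ → Set ℝ → ℝ
  | 0 => fun x E => diracSF x E
  | n + 1 => fun x E => faIntegral (p1 x) fun y => p1n n y E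

/-- The `n`-step transition function of CM2. -/
noncomputable def p2n : ℕ → ℝ → Set ℝ → ℝ
  | 0 => fun x E => diracSF x E
  | n + 1 => fun x E => faIntegral (p2 x) fun y => p2n n y E

/-- The `n`-step transition function of CM3. -/
noncomputable def p3n : ℕ → ℝ → Set ℝ → ℝ
  | 0 => fun x E => diracSF x E
  | n + 1 => fun x E => faIntegral (p3 x) fun y => p3n n y E

open scoped Classical

lemma diracSF_apply (y : ℝ) (E : Set ℝ) : diracSF y E = if y ∈ E then 1 else 0 :=
  Set.indicator_apply E _ y

lemma diracSF_nonneg (y : ℝ) (E : Set ℝ) : 0 ≤ diracSF y E := by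
  rw [diracSF_apply]; split <;> norm_num

lemma diracSF_le_one (y : ℝ) (E : Set ℝ) : diracSF y E ≤ 1 := by
  rw [diracSF_apply]; split <;> norm_num

lemma g_eq (c : ℝ) : (fun t : ℝ => if t < c then (1:ℝ) else 0)
    = (Set.Iio c).indicator (fun _ => (1:ℝ)) := by
  funext t; simp [Set.indicator_apply]

lemma g_int (c : ℝ) :
    IntegrableOn (fun t : ℝ => if t < c then (1:ℝ) else 0) (Set.Ioi 0) := by
  rw [g_eq, IntegrableOn, integrable_indicator_iff measurableSet_Iio]
  refine integrableOn_const (ne_of_lt ?_)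
  rw [Measure.restrict_apply measurableSet_Iio, Set.inter_comm, Set.Ioi_inter_Iio,
    Real.volume_Ioo]
  exact ENNReal.ofReal_lt_top

lemma g_integral (c : ℝ) :
    ∫ t in Set.Ioi (0:ℝ), (if t < c then (1:ℝ) else 0) = max c 0 := by
  rw [show (fun t : ℝ => if t < c then (1:ℝ) else 0) = (Set.Iio c).indicator (fun _ => (1:ℝ)) from g_eq c]
  rw [MeasureTheory.setIntegral_indicator measurableSet_Iio, MeasureTheory.setIntegral_const,
    Set.Ioi_inter_Iio, measureReal_def, Real.volume_Ioo, smul_eq_mul, mul_one, sub_zero]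
  rcases le_total c 0 with h | h
  · rw [ENNReal.ofReal_eq_zero.2 h, ENNReal.toReal_zero, max_eq_right h]
  · rw [ENNReal.toReal_ofReal h, max_eq_left h]



lemma max_sub_max_neg (c : ℝ) : max c 0 - max (-c) 0 = c := by
  rcases le_total c 0 with h | h
  · rw [max_eq_right h, max_eq_left (by linarith)]; ring
  · rw [max_eq_left h, max_eq_right (by linarith)]; ring

lemma faIntegral_comb (a b u v : ℝ) (f : ℝ → ℝ) :
    faIntegral (fun E => a * diracSF u E + b * diracSF v E) f = a * f u + b * f v := by
  unfold faIntegral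
  simp only [diracSF_apply, Set.mem_setOf_eq]
  have hlt : ∀ w : ℝ, (fun t : ℝ => if f w < -t then (1:ℝ) else 0)
      = fun t : ℝ => if t < -f w then (1:ℝ) else 0 := by
    intro w; funext t
    congr 1
    · simp only [eq_iff_iff]; constructor <;> intro h <;> linarith
  rw [MeasureTheory.integral_add ((g_int (f u)).const_mul a) ((g_int (f v)).const_mul b)]
  rw [show (fun t : ℝ => a * (if f u < -t then (1:ℝ) else 0) + b * (if f v < -t then (1:ℝ) else 0))
      = fun t : ℝ => a * (if t < -f u then (1:ℝ) else 0) + b * (if t < -f v then (1:ℝ) else 0) by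
    funext t; rw [congrFun (hlt u) t, congrFun (hlt v) t]]
  rw [MeasureTheory.integral_add ((g_int (-f u)).const_mul a) ((g_int (-f v)).const_mul b)]
  rw [MeasureTheory.integral_const_mul, MeasureTheory.integral_const_mul,
    MeasureTheory.integral_const_mul, MeasureTheory.integral_const_mul,
    g_integral, g_integral, g_integral, g_integral]
  linear_combination a * max_sub_max_neg (f u) + b * max_sub_max_neg (f v)



lemma p3_eq_low {x : ℝ} (hx : x ≠ 1) (h2 : x ≤ 1/2) :
    p3 x = fun E => x * diracSF (x^2) E + (1-x) * diracSF 0 E := by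
  funext E; unfold p3; rw [if_neg hx, if_pos h2]

lemma p3_eq_high {x : ℝ} (hx : x ≠ 1) (h2 : ¬ x ≤ 1/2) :
    p3 x = fun E => (1-x) * diracSF (x^2) E + x * diracSF 0 E := by
  funext E; unfold p3; rw [if_neg hx, if_neg h2]

lemma p3_one : p3 1 = fun E => 1 * diracSF 1 E + 0 * diracSF 0 E := by
  funext E; simp [p3]

lemma p3n_one : ∀ n : ℕ, ∀ E, p3n n 1 E = diracSF 1 E := by
  intro n
  induction n with
  | zero => intro E; rfl
  | succ n ih =>
    intro E
    show faIntegral (p3 1) (fun y => p3n n y E) = diracSF 1 E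
    rw [p3_one, faIntegral_comb, ih E]; ring

lemma p3n_zero : ∀ n : ℕ, ∀ E, p3n n 0 E = diracSF 0 E := by
  intro n
  induction n with
  | zero => intro E; rfl
  | succ n ih =>
    intro E
    show faIntegral (p3 0) (fun y => p3n n y E) = diracSF 0 E
    rw [p3_eq_low (by norm_num) (by norm_num), faIntegral_comb]
    have h0 : (0:ℝ)^2 = 0 := by norm_num
    rw [h0, ih E]; ring

lemma p3n_key : ∀ n : ℕ, 1 ≤ n → ∀ x : ℝ, 0 ≤ x → x < 1 →
    ∃ α w : ℝ, 0 ≤ α ∧ α ≤ (3/4 : ℝ)^n ∧ 0 ≤ w ∧ w < 1 ∧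
      ∀ E, p3n n x E = α * diracSF w E + (1-α) * diracSF 0 E := by
  intro n hn
  induction n, hn using Nat.le_induction with
  | base =>
    intro x hx0 hx1
    have hxne : x ≠ 1 := ne_of_lt hx1
    have hw0 : (0:ℝ) ≤ x^2 := sq_nonneg x
    have hw1 : x^2 < 1 := by nlinarith
    by_cases h : x ≤ 1/2
    · refine ⟨x, x^2, hx0, by norm_num; linarith, hw0, hw1, fun E => ?_⟩
      show faIntegral (p3 x) (fun y => p3n 0 y E) = _
      rw [p3_eq_low hxne h, faIntegral_comb]; simp only [p3n]
    · refine ⟨1-x, x^2, by linarith, by push_neg at h; norm_num; linarith, hw0, hw1, fun E => ?_⟩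
      show faIntegral (p3 x) (fun y => p3n 0 y E) = _
      rw [p3_eq_high hxne h, faIntegral_comb]; simp only [p3n]; ring
  | succ n hn ih =>
    intro x hx0 hx1
    have hxne : x ≠ 1 := ne_of_lt hx1
    have hw0 : (0:ℝ) ≤ x^2 := sq_nonneg x
    have hw1 : x^2 < 1 := by nlinarith
    obtain ⟨α, w, hα0, hαle, hw0', hw1', hform⟩ := ih (x^2) hw0 hw1
    have hpn : (0:ℝ) ≤ (3/4:ℝ)^n := by positivity
    by_cases h : x ≤ 1/2
    · refine ⟨x * α, w, mul_nonneg hx0 hα0, ?_, hw0', hw1', fun E => ?_⟩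
      · calc x * α ≤ (3/4) * (3/4)^n :=
              mul_le_mul (by linarith) hαle hα0 (by norm_num)
          _ = (3/4)^(n+1) := by rw [pow_succ]; ring
      · show faIntegral (p3 x) (fun y => p3n n y E) = _
        rw [p3_eq_low hxne h, faIntegral_comb, hform E, p3n_zero n E]; ring
    · push_neg at h
      refine ⟨(1-x) * α, w, mul_nonneg (by linarith) hα0, ?_, hw0', hw1', fun E => ?_⟩
      · calc (1-x) * α ≤ (3/4) * (3/4)^n :=
              mul_le_mul (by linarith) hαle hα0 (by norm_num)
          _ = (3/4)^(n+1) := by rw [pow_succ]; ring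
      · show faIntegral (p3 x) (fun y => p3n n y E) = _
        rw [p3_eq_high hxne (not_le.2 h), faIntegral_comb, hform E, p3n_zero n E]; ring


/-- Uniform exponential ergodicity of CM3: `pⁿ(x₀,(0,1)) ≤ (3/4)ⁿ` for all `x₀ ∈ [0,1]`,
hence `pⁿ(x₀,{0}) ≥ 1 - (3/4)ⁿ` for `x₀ ∈ [0,1)` and
`sup_{x₀ ∈ [0,1)} ‖pⁿ(x₀,·) - δ₀‖ ≤ (3/4)ⁿ → 0`; moreover CM3 satisfies the
Doob–Doeblin condition (D) with `φ = (1/2)δ₀ + (1/2)δ₁`, `ε = 1/4`, `k = 1`. -/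
theorem cm3_uniform_ergodicity :
    (∀ n : ℕ, 1 ≤ n → ∀ x₀ ∈ Set.Icc (0:ℝ) 1,
      p3n n x₀ (Set.Ioo 0 1) ≤ (3 / 4 : ℝ) ^ n) ∧
    (∀ n : ℕ, 1 ≤ n → ∀ x₀ ∈ Set.Ico (0:ℝ) 1,
      1 - (3 / 4 : ℝ) ^ n ≤ p3n n x₀ {0}) ∧
    (∀ n : ℕ, 1 ≤ n → ∀ x₀ ∈ Set.Ico (0:ℝ) 1, ∀ E : Set ℝ, MeasurableSet E →
      |p3n n x₀ E - diracSF 0 E| ≤ (3 / 4 : ℝ) ^ n) ∧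
    Tendsto (fun n : ℕ => ((3:ℝ) / 4) ^ n) atTop (nhds 0) ∧
    (∀ E : Set ℝ, MeasurableSet E →
      (1 / 2 : ℝ) * diracSF 0 E + (1 / 2 : ℝ) * diracSF 1 E ≤ 1 / 4 →
      ∀ x ∈ Set.Icc (0:ℝ) 1, p3 x E ≤ 3 / 4) := by
  refine ⟨?_, ?_, ?_, ?_, ?_⟩
  · -- claim 1
    rintro n hn x₀ ⟨h0, h1⟩
    rcases eq_or_lt_of_le h1 with heq | hlt
    · rw [heq, p3n_one n]
      rw [diracSF_apply, if_neg (by simp)]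
      positivity
    · obtain ⟨α, w, hα0, hαle, _, _, hform⟩ := p3n_key n hn x₀ h0 hlt
      rw [hform]
      have d1 := diracSF_le_one w (Set.Ioo 0 1)
      have d2 := diracSF_nonneg w (Set.Ioo 0 1)
      have d0 : diracSF 0 (Set.Ioo 0 1) = 0 := by
        rw [diracSF_apply, if_neg (by simp)]
      rw [d0]
      nlinarith
  · -- claim 2
    rintro n hn x₀ ⟨h0, h1⟩
    obtain ⟨α, w, hα0, hαle, _, _, hform⟩ := p3n_key n hn x₀ h0 h1
    rw [hform]
    have d2 := diracSF_nonneg w ({0} : Set ℝ)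
    have d0 : diracSF 0 ({0} : Set ℝ) = 1 := by
      rw [diracSF_apply, if_pos (by simp)]
    rw [d0]
    nlinarith
  · -- claim 3
    rintro n hn x₀ ⟨h0, h1⟩ E hE
    obtain ⟨α, w, hα0, hαle, _, _, hform⟩ := p3n_key n hn x₀ h0 h1
    rw [hform]
    have d1 := diracSF_le_one w E
    have d2 := diracSF_nonneg w E
    have d3 := diracSF_le_one 0 E
    have d4 := diracSF_nonneg 0 E
    rw [abs_le]
    constructor <;> nlinarith
  · -- claim 4
    exact tendsto_pow_atTop_nhds_zero_of_lt_one (by norm_num) (by norm_num)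
  · -- claim 5
    rintro E hE hφ x ⟨hx0, hx1⟩
    have h0 : diracSF 0 E = 0 ∨ diracSF 0 E = 1 := by
      rw [diracSF_apply]; split <;> simp
    have h1 : diracSF 1 E = 0 ∨ diracSF 1 E = 1 := by
      rw [diracSF_apply]; split <;> simp
    have hd0 : diracSF 0 E = 0 := by
      rcases h0 with h | h
      · exact h
      · rcases h1 with h' | h' <;> rw [h, h'] at hφ <;> norm_num at hφ
    have hd1 : diracSF 1 E = 0 := by
      rcases h1 with h | h
      · exact h
      · rcases h0 with h' | h' <;> rw [h, h'] at hφ <;> norm_num at hφ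
    by_cases hx : x = 1
    · rw [hx, show p3 1 E = diracSF 1 E by unfold p3; rw [if_pos rfl], hd1]; norm_num
    · have d1 := diracSF_le_one (x^2) E
      have d2 := diracSF_nonneg (x^2) E
      by_cases h : x ≤ 1/2
      · rw [p3_eq_low hx h]; simp only [hd0]
        nlinarith
      · rw [p3_eq_high hx h]; simp only [hd0]
        push_neg at h
        nlinarith
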